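/- Let a : ℕ → ℂ be such that a(n) lies in a wedge W(θ₁,θ₂) with 0 ≤ θ₂ − θ₁ < π for all but finitely many n ≥ 1. Then the Dirichlet series Σ a(n) n^{-s} has equal abscissa of convergence and abscissa of absolute convergence. -/

import Mathlib

open Complex Real Filter Topology

/-- The wedge `W(θ₁,θ₂) = {r·e^{iθ} : r ≥ 0, θ ∈ [θ₁,θ₂]}`. -/
def Wedge (θ₁ θ₂ : ℝ) : Set ℂ :=
  {z : ℂ | ∃ r θ : ℝ, 0 ≤ r ∧ θ₁ ≤ θ ∧ θ ≤ θ₂ ∧ z = r * Complex.exp (θ * Complex.I)}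

lemma wedge_key {θ₁ θ₂ : ℝ} (h₂ : θ₂ - θ₁ < Real.pi) {z : ℂ} (hz : z ∈ Wedge θ₁ θ₂) :
    ‖z‖ * Real.cos ((θ₂ - θ₁) / 2) ≤
      (Complex.exp (-((((θ₁ + θ₂) / 2 : ℝ)) : ℂ) * Complex.I) * z).re := by
  obtain ⟨r, θ, hr, hθ₁, hθ₂, rfl⟩ := hz
  set φ : ℝ := (θ₁ + θ₂) / 2 with hφ
  have e1 : Complex.exp (-(φ : ℂ) * Complex.I) * ((r : ℂ) * Complex.exp ((θ : ℝ) * Complex.I))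
      = (r : ℂ) * Complex.exp (((θ - φ : ℝ) : ℂ) * Complex.I) := by
    rw [mul_left_comm, ← Complex.exp_add]
    push_cast
    ring_nf
  rw [e1]
  have e2 : ((r : ℂ) * Complex.exp (((θ - φ : ℝ) : ℂ) * Complex.I)).re
      = r * Real.cos (θ - φ) := by
    rw [Complex.mul_re]
    simp only [Complex.ofReal_re, Complex.ofReal_im, zero_mul, sub_zero]
    rw [Complex.exp_ofReal_mul_I_re]
  have e3 : ‖(r : ℂ) * Complex.exp ((θ : ℝ) * Complex.I)‖ = r := by
    simp [_root_.abs_of_nonneg hr, hr]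
  rw [e2, e3]
  have hcos : Real.cos ((θ₂ - θ₁) / 2) ≤ Real.cos (θ - φ) := by
    have h1 : |θ - φ| ≤ (θ₂ - θ₁) / 2 := by
      rw [abs_le]; constructor <;> [skip; skip] <;> simp only [hφ] <;> linarith
    have := Real.cos_le_cos_of_nonneg_of_le_pi (abs_nonneg (θ - φ)) (by linarith [Real.pi_pos]) h1
    rwa [Real.cos_abs] at this
  exact mul_le_mul_of_nonneg_left hcos hr

/-- The Dirichlet series `Σ_{n≥1} a(n) n^{-s}` converges at `s` (convergence of partial sums). -/
def DirichletConvAt (a : ℕ → ℂ) (s : ℂ) : Prop :=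
  ∃ l : ℂ, Tendsto (fun N => ∑ n ∈ Finset.Icc 1 N, a n / (n : ℂ) ^ s) atTop (𝓝 l)

lemma dirichletConvAt_of_summable {a : ℕ → ℂ} {s : ℂ}
    (h : Summable fun n : ℕ => ‖a n / (n : ℂ) ^ s‖) : DirichletConvAt a s := by
  set f : ℕ → ℂ := fun n => a n / (n : ℂ) ^ s with hf
  have hs : Summable f := by
    apply Summable.of_norm; exact h
  have hT := hs.hasSum.tendsto_sum_nat
  refine ⟨(∑' n, f n) - f 0, ?_⟩
  have key : ∀ N, ∑ n ∈ Finset.Icc 1 N, f n = ∑ n ∈ Finset.range (N + 1), f n - f 0 := by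
    intro N
    have hins : Finset.range (N + 1) = insert 0 (Finset.Icc 1 N) := by
      ext x; simp only [Finset.mem_range, Finset.mem_insert, Finset.mem_Icc]; omega
    rw [hins, Finset.sum_insert (by simp)]
    ring
  show Tendsto (fun N => ∑ n ∈ Finset.Icc 1 N, f n) atTop _; simp only [key]
  exact ((hT.comp (tendsto_add_atTop_nat 1)).sub_const (f 0))

lemma summable_norm_of_conv {a : ℕ → ℂ} {θ₁ θ₂ : ℝ}
    (h₁ : 0 ≤ θ₂ - θ₁) (h₂ : θ₂ - θ₁ < Real.pi)
    (hwedge : ∀ᶠ n in atTop, a n ∈ Wedge θ₁ θ₂) {σ : ℝ}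
    (hc : DirichletConvAt a (σ : ℂ)) :
    Summable fun n : ℕ => ‖a n / (n : ℂ) ^ (σ : ℂ)‖ := by
  set c : ℝ := Real.cos ((θ₂ - θ₁) / 2) with hcdef
  have hcpos : 0 < c := by
    apply Real.cos_pos_of_mem_Ioo
    constructor
    · linarith [Real.pi_pos]
    · linarith
  set u : ℂ := Complex.exp (-((((θ₁ + θ₂) / 2 : ℝ)) : ℂ) * Complex.I) with hu
  set f : ℕ → ℝ := fun n => (u * (a n / (n : ℂ) ^ (σ : ℂ))).re with hfdef
  obtain ⟨l, hl⟩ := hc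
  set T : ℕ → ℝ := fun N => ∑ n ∈ Finset.Icc 1 N, f n with hTdef
  have hT : Tendsto T atTop (𝓝 ((u * l).re)) := by
    have h1 : Tendsto (fun N => (u * ∑ n ∈ Finset.Icc 1 N, a n / (n : ℂ) ^ (σ : ℂ)).re)
        atTop (𝓝 ((u * l).re)) :=
      (Complex.continuous_re.tendsto _).comp (hl.const_mul u)
    convert h1 using 2 with N
    rw [Finset.mul_sum, Complex.re_sum]
  obtain ⟨N₀, hN₀⟩ := eventually_atTop.mp hwedge
  set N₁ : ℕ := max N₀ 1 with hN₁def
  have hbound : ∀ n, N₁ ≤ n → ‖a n / (n : ℂ) ^ (σ : ℂ)‖ * c ≤ f n := by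
    intro n hn
    have hn1 : 1 ≤ n := le_trans (le_max_right _ _) hn
    have hw : a n / (n : ℂ) ^ (σ : ℂ) ∈ Wedge θ₁ θ₂ := by
      obtain ⟨r, θ, hr, hθa, hθb, heq⟩ := hN₀ n (le_trans (le_max_left _ _) hn)
      have hnpos : (0 : ℝ) < (n : ℝ) ^ σ :=
        Real.rpow_pos_of_pos (by exact_mod_cast hn1) σ
      refine ⟨r * ((n : ℝ) ^ σ)⁻¹, θ, by positivity, hθa, hθb, ?_⟩
      have hcast : ((n : ℂ) ^ (σ : ℂ)) = (((n : ℝ) ^ σ : ℝ) : ℂ) := by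
        rw [Complex.ofReal_cpow (Nat.cast_nonneg n) σ]
        norm_num
      rw [heq, hcast]
      push_cast
      field_simp
    exact wedge_key h₂ hw
  have hf0 : ∀ n, N₁ ≤ n → 0 ≤ f n := fun n hn =>
    le_trans (by positivity) (hbound n hn)
  set g : ℕ → ℝ := fun n => if N₁ ≤ n then f n else 0 with hgdef
  have hg0 : ∀ n, 0 ≤ g n := by
    intro n
    by_cases hn : N₁ ≤ n
    · simpa [hgdef, hn] using hf0 n hn
    · simp [hgdef, hn]
  have hN₁1 : 1 ≤ N₁ := le_max_right _ _
  have hIcc : ∀ N, Finset.Icc 1 N = Finset.Ioc 0 N := fun N => Finset.Icc_add_one_left_eq_Ioc 0 N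
  have claim : ∀ N, N₁ ≤ N → ∑ n ∈ Finset.range (N + 1), g n = T N - T (N₁ - 1) := by
    intro N hN
    have e1 : ∑ n ∈ Finset.range (N + 1), g n = ∑ n ∈ Finset.Ioc (N₁ - 1) N, g n := by
      refine (Finset.sum_subset ?_ ?_).symm
      · intro x hx
        rw [Finset.mem_Ioc] at hx
        rw [Finset.mem_range]
        omega
      · intro x hx hx'
        rw [Finset.mem_range] at hx
        rw [Finset.mem_Ioc] at hx'
        have : ¬ (N₁ ≤ x) := by omega
        simp [hgdef, this]
    have e2 : ∑ n ∈ Finset.Ioc (N₁ - 1) N, g n = ∑ n ∈ Finset.Ioc (N₁ - 1) N, f n := by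
      refine Finset.sum_congr rfl ?_
      intro x hx
      rw [Finset.mem_Ioc] at hx
      have : N₁ ≤ x := by omega
      simp [hgdef, this]
    have e3 : T (N₁ - 1) + ∑ n ∈ Finset.Ioc (N₁ - 1) N, f n = T N := by
      simp only [hTdef, hIcc]
      exact Finset.sum_Ioc_consecutive f (Nat.zero_le _) (by omega)
    rw [e1, e2]; linarith
  have hTle : ∀ M, N₁ ≤ M → T M ≤ (u * l).re := by
    intro M hM
    refine ge_of_tendsto hT ?_
    filter_upwards [eventually_ge_atTop M] with K hK
    have e3 : T M + ∑ n ∈ Finset.Ioc M K, f n = T K := by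
      simp only [hTdef, hIcc]
      exact Finset.sum_Ioc_consecutive f (Nat.zero_le _) hK
    have hpos : 0 ≤ ∑ n ∈ Finset.Ioc M K, f n := by
      refine Finset.sum_nonneg ?_
      intro n hn
      rw [Finset.mem_Ioc] at hn
      exact hf0 n (by omega)
    linarith
  have hgsum : Summable g := by
    refine summable_of_sum_range_le (c := (u * l).re - T (N₁ - 1)) hg0 ?_
    intro N
    have h1 : ∑ n ∈ Finset.range N, g n ≤ ∑ n ∈ Finset.range (N + N₁ + 1), g n := by
      refine Finset.sum_le_sum_of_subset_of_nonneg ?_ (fun n _ _ => hg0 n)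
      exact Finset.range_subset_range.mpr (by omega)
    have h2 := claim (N + N₁) (by omega)
    have h3 := hTle (N + N₁) (by omega)
    linarith
  refine Summable.of_norm_bounded_eventually (g := fun n => c⁻¹ * g n) (hgsum.mul_left c⁻¹) ?_
  rw [Nat.cofinite_eq_atTop]
  filter_upwards [eventually_ge_atTop N₁] with n hn
  rw [Real.norm_eq_abs, _root_.abs_of_nonneg (norm_nonneg _)]
  have hb := hbound n hn
  have : g n = f n := by simp [hgdef, hn]
  rw [this, le_inv_mul_iff₀ hcpos]
  linarith [hb, mul_comm (‖a n / (n : ℂ) ^ (σ : ℂ)‖) c]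

/-- The abscissa of convergence of `Σ a(n) n^{-s}`. -/
noncomputable def abscissaConv (a : ℕ → ℂ) : ℝ :=
  sInf {σ : ℝ | ∀ s : ℂ, σ < s.re → DirichletConvAt a s}

/-- The abscissa of absolute convergence of `Σ a(n) n^{-s}`. -/
noncomputable def abscissaAbsConv (a : ℕ → ℂ) : ℝ :=
  sInf {σ : ℝ | ∀ s : ℂ, σ < s.re → Summable (fun n : ℕ => ‖a n / (n : ℂ) ^ s‖)}

/-- If the coefficients `a n` eventually lie in a wedge of opening angle `< π`, then the
Dirichlet series `Σ a(n) n^{-s}` has equal abscissa of convergence and abscissa of absolute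
convergence. -/
theorem abscissaConv_eq_abscissaAbsConv_of_wedge (a : ℕ → ℂ) (θ₁ θ₂ : ℝ)
    (h₁ : 0 ≤ θ₂ - θ₁) (h₂ : θ₂ - θ₁ < Real.pi)
    (hwedge : ∀ᶠ n in atTop, a n ∈ Wedge θ₁ θ₂) :
    abscissaConv a = abscissaAbsConv a := by
  have hset : {σ : ℝ | ∀ s : ℂ, σ < s.re → DirichletConvAt a s}
      = {σ : ℝ | ∀ s : ℂ, σ < s.re → Summable (fun n : ℕ => ‖a n / (n : ℂ) ^ s‖)} := by
    ext σ
    constructor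
    · intro hσ s hs
      set σ' : ℝ := (σ + s.re) / 2 with hσ'def
      have hσ'lt : σ' ≤ s.re := by simp only [hσ'def]; linarith
      have hc : DirichletConvAt a ((σ' : ℝ) : ℂ) :=
        hσ (σ' : ℂ) (by rw [Complex.ofReal_re]; simp only [hσ'def]; linarith)
      have hsum := summable_norm_of_conv h₁ h₂ hwedge hc
      refine Summable.of_norm_bounded_eventually (g := fun n => ‖a n / (n : ℂ) ^ (σ' : ℂ)‖) hsum ?_
      rw [Nat.cofinite_eq_atTop]
      filter_upwards [eventually_ge_atTop 1] with n hn
      rw [Real.norm_eq_abs, _root_.abs_of_nonneg (norm_nonneg _), norm_div, norm_div]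
      have hnpos : (0 : ℝ) < (n : ℝ) := by exact_mod_cast hn
      have hnc : ((n : ℂ)) = (((n : ℝ)) : ℂ) := by norm_num
      have e1 : ‖(n : ℂ) ^ s‖ = (n : ℝ) ^ s.re := by
        rw [hnc]
        exact Complex.norm_cpow_eq_rpow_re_of_pos hnpos s
      have e2 : ‖(n : ℂ) ^ (σ' : ℂ)‖ = (n : ℝ) ^ σ' := by
        rw [hnc]
        simpa using Complex.norm_cpow_eq_rpow_re_of_pos hnpos (σ' : ℂ)
      rw [e1, e2]
      have hle : (n : ℝ) ^ σ' ≤ (n : ℝ) ^ s.re :=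
        Real.rpow_le_rpow_of_exponent_le (by exact_mod_cast hn) hσ'lt
      have hp : (0 : ℝ) < (n : ℝ) ^ σ' := Real.rpow_pos_of_pos hnpos σ'
      gcongr
    · intro hσ s hs
      exact dirichletConvAt_of_summable (hσ s hs)
  unfold abscissaConv abscissaAbsConv
  rw [hset]
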